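/- Let G be a minimally nonperfectly divisible graph and v ∈ V(G). Then there exists a subset Y ⊆ N(v) with independence number α(G[Y]) ≥ 2 such that ω(G[N(v) \ Y]) = ω(G) − 1. -/

import Mathlib

open SimpleGraph

variable {V : Type}

/-- The clique number of the subgraph of `G` induced on `S`. -/
noncomputable def omegaOn (G : SimpleGraph V) (S : Set V) : ℕ :=
  sSup {n | ∃ s : Finset V, ↑s ⊆ S ∧ G.IsNClique n s}

/-- The subgraph of `G` induced on `S` is a perfect graph. -/
def IsPerfectOn (G : SimpleGraph V) (S : Set V) : Prop :=
  ∀ T : Set V, T ⊆ S → (G.induce T).chromaticNumber = (omegaOn G T : ℕ∞)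

/-- Every nonempty induced subgraph of `G[S]` admits a perfect division. -/
def PerfDivOn (G : SimpleGraph V) (S : Set V) : Prop :=
  ∀ H : Set V, H ⊆ S → H.Nonempty →
    ∃ A B : Set V, A ∪ B = H ∧ Disjoint A B ∧
      IsPerfectOn G A ∧ omegaOn G B < omegaOn G H

/-- `G` is minimally nonperfectly divisible. -/
def MNPD (G : SimpleGraph V) : Prop :=
  ¬ PerfDivOn G Set.univ ∧ ∀ S : Set V, S ≠ Set.univ → PerfDivOn G S

/-- The external neighbourhood `N(X)`. -/
def extNbhd (G : SimpleGraph V) (X : Set V) : Set V :=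
  {v | v ∉ X ∧ ∃ x ∈ X, G.Adj v x}

section Aux

variable [Fintype V] {G : SimpleGraph V}

lemma omega_bdd (G : SimpleGraph V) (S : Set V) :
    BddAbove {n | ∃ s : Finset V, ↑s ⊆ S ∧ G.IsNClique n s} := by
  refine ⟨Fintype.card V, fun n hn => ?_⟩
  obtain ⟨s, -, hs⟩ := hn
  rw [← hs.2]
  exact s.card_le_univ.trans_eq Finset.card_univ

lemma omega_ne (G : SimpleGraph V) (S : Set V) :
    Set.Nonempty {n | ∃ s : Finset V, ↑s ⊆ S ∧ G.IsNClique n s} :=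
  ⟨0, ∅, by simp, by simp⟩

lemma le_omegaOn {S : Set V} {n : ℕ} {s : Finset V} (h1 : ↑s ⊆ S)
    (h2 : G.IsNClique n s) : n ≤ omegaOn G S :=
  le_csSup (omega_bdd G S) ⟨s, h1, h2⟩

lemma exists_omega_clique (G : SimpleGraph V) (S : Set V) :
    ∃ s : Finset V, ↑s ⊆ S ∧ G.IsNClique (omegaOn G S) s :=
  Nat.sSup_mem (omega_ne G S) (omega_bdd G S)

lemma omegaOn_mono {S T : Set V} (h : S ⊆ T) : omegaOn G S ≤ omegaOn G T := by
  obtain ⟨s, h1, h2⟩ := exists_omega_clique G S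
  exact le_omegaOn (h1.trans h) h2

lemma omegaOn_empty (G : SimpleGraph V) : omegaOn G (∅ : Set V) = 0 := by
  obtain ⟨s, h1, h2⟩ := exists_omega_clique G (∅ : Set V)
  have hs : s = ∅ := by
    simpa using Finset.coe_eq_empty.mp (Set.subset_empty_iff.mp h1)
  rw [← h2.2, hs, Finset.card_empty]

lemma omegaOn_singleton (G : SimpleGraph V) (w : V) : omegaOn G {w} = 1 := by
  refine le_antisymm ?_ ?_
  · obtain ⟨s, h1, h2⟩ := exists_omega_clique G ({w} : Set V)
    rw [← h2.2]
    have : s ⊆ {w} := by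
      intro x hx
      simpa using h1 hx
    calc s.card ≤ ({w} : Finset V).card := Finset.card_le_card this
      _ = 1 := Finset.card_singleton w
  · exact le_omegaOn (s := {w}) (by simp) (SimpleGraph.isNClique_singleton.mpr rfl)

lemma clique_le_chrom {T : Set V} {s : Finset V} (h1 : ↑s ⊆ T)
    (h2 : G.IsClique (↑s : Set V)) :
    (s.card : ℕ∞) ≤ (G.induce T).chromaticNumber := by
  classical
  let f : {x // x ∈ s} ↪ ↑T :=
    ⟨fun x => ⟨x.1, h1 x.2⟩, by
      intro a b hab
      exact Subtype.ext (by simpa using congrArg Subtype.val hab)⟩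
  let t : Finset ↑T := s.attach.map f
  have hcard : t.card = s.card := by
    simp [t]
  have hclique : (G.induce T).IsClique (↑t : Set ↑T) := by
    intro a ha b hb hne
    simp only [t, Finset.coe_map, Set.mem_image, Finset.mem_coe,
      Finset.mem_attach] at ha hb
    obtain ⟨a', -, ha'⟩ := ha
    obtain ⟨b', -, hb'⟩ := hb
    have haa : (a : V) ∈ s := by rw [← ha']; exact a'.2
    have hbb : (b : V) ∈ s := by rw [← hb']; exact b'.2
    have hne' : (a : V) ≠ (b : V) := fun h => hne (Subtype.ext h)
    exact h2 haa hbb hne'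
  have := hclique.card_le_chromaticNumber
  rwa [hcard] at this

lemma perfect_extend {A : Set V} {v : V} (hv : v ∉ A) (hA : IsPerfectOn G A)
    (hcl : G.IsClique (G.neighborSet v ∩ A)) : IsPerfectOn G (A ∪ {v}) := by
  classical
  intro T hT
  by_cases hvT : v ∈ T
  · -- main case
    set n := omegaOn G T with hn
    have hT' : T \ {v} ⊆ A := by
      intro x hx
      rcases hT hx.1 with h | h
      · exact h
      · exact absurd h hx.2
    -- lower bound on chromatic number
    obtain ⟨s, hs1, hs2⟩ := exists_omega_clique G T
    have hlow : (n : ℕ∞) ≤ (G.induce T).chromaticNumber := by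
      have := clique_le_chrom hs1 hs2.1
      rwa [hs2.2] at this
    -- a coloring of T \ {v}
    have hchrom' : (G.induce (T \ {v})).chromaticNumber = (omegaOn G (T \ {v}) : ℕ∞) :=
      hA _ hT'
    have hmono : omegaOn G (T \ {v}) ≤ n := omegaOn_mono Set.diff_subset
    have hcol' : (G.induce (T \ {v})).Colorable n := by
      rw [← SimpleGraph.chromaticNumber_le_iff_colorable, hchrom']
      exact_mod_cast hmono
    obtain ⟨C⟩ := hcol'
    have hn1 : 1 ≤ n := le_omegaOn (s := {v}) (by simpa using hvT)
      (SimpleGraph.isNClique_singleton.mpr rfl)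
    -- the set of colors used on neighbors of v inside T
    let Q : Finset ↑(T \ {v}) := Finset.univ.filter (fun x => G.Adj v x.1)
    let D : Finset (Fin n) := Q.image C
    -- the vertices of Q together with v form a clique in T
    have hQclique : G.IsNClique ((Q.image (Subtype.val)).card + 1)
        (insert v (Q.image Subtype.val)) := by
      constructor
      · rw [Finset.coe_insert]
        apply SimpleGraph.IsClique.insert
        · intro a ha b hb hab
          simp only [Finset.coe_image, Set.mem_image, Finset.mem_coe,
            Finset.mem_filter, Q] at ha hb
          obtain ⟨a', ⟨-, haadj⟩, ha'⟩ := ha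
          obtain ⟨b', ⟨-, hbadj⟩, hb'⟩ := hb
          refine hcl ?_ ?_ hab
          · exact ⟨by rw [← ha']; exact haadj, by rw [← ha']; exact hT' a'.2⟩
          · exact ⟨by rw [← hb']; exact hbadj, by rw [← hb']; exact hT' b'.2⟩
        · intro b hb hvb
          simp only [Finset.mem_coe, Finset.mem_image, Finset.mem_filter, Q] at hb
          obtain ⟨b', ⟨-, hbadj⟩, hb'⟩ := hb
          rw [← hb']; exact hbadj
      · rw [Finset.card_insert_of_notMem]
        intro hvmem
        simp only [Finset.mem_image, Q] at hvmem
        obtain ⟨b', -, hb'⟩ := hvmem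
        exact b'.2.2 (by simp [hb'])
    have hQsub : ↑(insert v (Q.image Subtype.val)) ⊆ T := by
      intro x hx
      simp only [Finset.coe_insert, Set.mem_insert_iff, Finset.coe_image,
        Set.mem_image, Finset.mem_coe] at hx
      rcases hx with rfl | ⟨a, -, rfl⟩
      · exact hvT
      · exact a.2.1
    have hQcard : (Q.image Subtype.val).card + 1 ≤ n := le_omegaOn hQsub hQclique
    have hQcard' : Q.card = (Q.image (Subtype.val)).card :=
      (Finset.card_image_of_injective Q Subtype.val_injective).symm
    have hD : D.card < n := by
      calc D.card ≤ Q.card := Finset.card_image_le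
        _ = (Q.image Subtype.val).card := hQcard'
        _ < n := by omega
    -- choose a fresh color for v
    have hfresh : ∃ d : Fin n, d ∉ D := by
      by_contra h
      push_neg at h
      have : (Finset.univ : Finset (Fin n)) ⊆ D := fun d _ => h d
      have := Finset.card_le_card this
      simp only [Finset.card_univ, Fintype.card_fin] at this
      omega
    obtain ⟨d0, hd0⟩ := hfresh
    -- build the coloring of T
    have hcolT : (G.induce T).Colorable n := by
      refine ⟨SimpleGraph.Coloring.mk
        (fun x => if h : x.1 = v then d0 else C ⟨x.1, ⟨x.2, h⟩⟩) ?_⟩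
      rintro ⟨a, haT⟩ ⟨b, hbT⟩ hadj
      have hadj' : G.Adj a b := hadj
      by_cases ha : a = v <;> by_cases hb : b = v
      · exact absurd (ha.trans hb.symm) (G.ne_of_adj hadj')
      · simp only [ha, hb, dif_pos, dif_neg, not_false_iff]
        intro heq
        apply hd0
        rw [heq]
        refine Finset.mem_image.mpr ⟨⟨b, hbT, hb⟩, ?_, rfl⟩
        simp only [Finset.mem_filter, Finset.mem_univ, true_and, Q]
        rw [← ha]; exact hadj'
      · simp only [ha, hb, dif_pos, dif_neg, not_false_iff]
        intro heq
        apply hd0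
        rw [← heq]
        refine Finset.mem_image.mpr ⟨⟨a, haT, ha⟩, ?_, rfl⟩
        simp only [Finset.mem_filter, Finset.mem_univ, true_and, Q]
        rw [← hb]; exact hadj'.symm
      · simp only [ha, hb, dif_neg, not_false_iff]
        have : (G.induce (T \ {v})).Adj ⟨a, haT, ha⟩ ⟨b, hbT, hb⟩ := hadj'
        exact C.valid this
    exact le_antisymm (hcolT.chromaticNumber_le) hlow
  · have : T ⊆ A := by
      intro x hx
      rcases hT hx with h | h
      · exact h
      · exact absurd h (by rintro rfl; exact hvT hx)
    exact hA T this

lemma perfect_singleton (G : SimpleGraph V) (w : V) : IsPerfectOn G {w} := by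
  intro T hT
  rcases Set.subset_singleton_iff_eq.mp hT with rfl | rfl
  · haveI : IsEmpty ↑(∅ : Set V) := by
      simp only [Set.isEmpty_coe_sort]
    rw [SimpleGraph.chromaticNumber_eq_zero_of_isEmpty, omegaOn_empty]
    simp
  · haveI : Nonempty ↑({w} : Set V) := ⟨⟨w, rfl⟩⟩
    haveI : Subsingleton ↑({w} : Set V) := by
      constructor
      rintro ⟨a, ha⟩ ⟨b, hb⟩
      simp only [Set.mem_singleton_iff] at ha hb
      exact Subtype.ext (ha.trans hb.symm)
    have h1 : (G.induce {w}).chromaticNumber ≤ 1 :=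
      SimpleGraph.chromaticNumber_le_one_of_subsingleton _
    have h2 : 0 < (G.induce {w}).chromaticNumber :=
      SimpleGraph.chromaticNumber_pos ((G.induce {w}).colorable_of_fintype)
    rw [omegaOn_singleton]
    exact le_antisymm (by exact_mod_cast h1) (by
      rw [Nat.cast_one, ENat.one_le_iff_ne_zero]
      exact h2.ne')

end Aux

theorem stmt_6 [Fintype V] (G : SimpleGraph V) (hG : MNPD G) (v : V) :
    ∃ Y : Set V, Y ⊆ G.neighborSet v ∧
      (∃ a ∈ Y, ∃ b ∈ Y, a ≠ b ∧ ¬ G.Adj a b) ∧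
      omegaOn G (G.neighborSet v \ Y) = omegaOn G Set.univ - 1 := by
  classical
  -- no division of the whole graph exists
  have hNoDiv : ∀ A B : Set V, A ∪ B = Set.univ → Disjoint A B →
      IsPerfectOn G A → ¬(omegaOn G B < omegaOn G Set.univ) := by
    intro A B h1 h2 h3 h4
    apply hG.1
    intro H hH hne
    by_cases hH' : H = Set.univ
    · subst hH'
      exact ⟨A, B, h1, h2, h3, h4⟩
    · exact hG.2 H hH' H subset_rfl hne
  set S : Set V := {v}ᶜ with hSdef
  by_cases hSne : S.Nonempty
  · have hSproper : S ≠ Set.univ := by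
      intro h
      have : v ∈ S := h ▸ Set.mem_univ v
      exact this rfl
    obtain ⟨A, B, hUn, hdis, hAperf, hB⟩ := hG.2 S hSproper S subset_rfl hSne
    set c := omegaOn G Set.univ with hc
    have h1c : 1 ≤ c :=
      le_omegaOn (s := {v}) (by simp) (SimpleGraph.isNClique_singleton.mpr rfl)
    have hAS : A ⊆ S := hUn ▸ Set.subset_union_left
    have hBS : B ⊆ S := hUn ▸ Set.subset_union_right
    have hvA : v ∉ A := fun h => hAS h rfl
    have hvB : v ∉ B := fun h => hBS h rfl
    have hBc : omegaOn G B < c :=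
      lt_of_lt_of_le hB (omegaOn_mono (Set.subset_univ S))
    -- Claim 1 : c ≤ ω(B ∪ {v})
    have hclaim1 : c ≤ omegaOn G (B ∪ {v}) := by
      by_contra h
      push_neg at h
      refine hNoDiv A (B ∪ {v}) ?_ ?_ hAperf h
      · rw [← Set.union_assoc, hUn, hSdef]
        exact Set.compl_union_self {v}
      · rw [Set.disjoint_union_right]
        exact ⟨hdis, Set.disjoint_singleton_right.mpr hvA⟩
    -- extract a clique of size exactly c in B ∪ {v}
    obtain ⟨s, hs1, hs2⟩ := exists_omega_clique G (B ∪ {v})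
    have hsc : c ≤ s.card := hs2.2 ▸ hclaim1
    obtain ⟨K, hKs, hKcard⟩ := Finset.exists_subset_card_eq hsc
    have hKclique : G.IsNClique c K := ⟨hs2.1.subset (Finset.coe_subset.mpr hKs), hKcard⟩
    have hKsub : ∀ x ∈ K, x ∈ B ∪ {v} := by
      intro x hx
      exact hs1 (hKs hx)
    have hvK : v ∈ K := by
      by_contra hvK
      have hKB : ↑K ⊆ B := by
        intro x hx
        have hxK : x ∈ K := hx
        rcases hKsub x hxK with h | h
        · exact h
        · exfalso
          apply hvK
          rw [← Set.mem_singleton_iff.mp h]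
          exact hxK
      exact absurd (le_omegaOn hKB hKclique) (not_le.mpr hBc)
    -- the clique minus v sits in N(v) ∩ B
    have hK'sub : ↑(K.erase v) ⊆ G.neighborSet v ∩ B := by
      intro x hx
      have hx' : x ∈ K.erase v := hx
      have hxK : x ∈ K := Finset.mem_of_mem_erase hx'
      have hxv : x ≠ v := Finset.ne_of_mem_erase hx'
      constructor
      · exact hKclique.1 (show v ∈ (K : Set V) from hvK)
          (show x ∈ (K : Set V) from hxK) (fun h => hxv h.symm)
      · rcases hKsub x hxK with h | h
        · exact h
        · exact absurd (Set.mem_singleton_iff.mp h) hxv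
    have hK'clique : G.IsNClique (c - 1) (K.erase v) := by
      constructor
      · apply hKclique.1.subset
        intro x hx
        have hx' : x ∈ K.erase v := hx
        exact Finset.mem_of_mem_erase hx'
      · rw [Finset.card_erase_of_mem hvK, hKcard]
    have hclaim3 : c - 1 ≤ omegaOn G (G.neighborSet v ∩ B) :=
      le_omegaOn hK'sub hK'clique
    -- Claim 4 : ω(N(v)) ≤ c - 1
    have hclaim4 : omegaOn G (G.neighborSet v) ≤ c - 1 := by
      obtain ⟨t, ht1, ht2⟩ := exists_omega_clique G (G.neighborSet v)
      have hvt : v ∉ t := by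
        intro h
        exact G.irrefl (ht1 (Finset.mem_coe.mpr h))
      have hins : G.IsNClique (omegaOn G (G.neighborSet v) + 1) (insert v t) := by
        constructor
        · rw [Finset.coe_insert]
          apply ht2.1.insert
          intro b hb _
          exact ht1 hb
        · rw [Finset.card_insert_of_notMem hvt, ht2.2]
      have hsub : ↑(insert v t) ⊆ (Set.univ : Set V) := Set.subset_univ _
      have := le_omegaOn hsub hins
      omega
    -- Y is N(v) ∩ A
    refine ⟨G.neighborSet v ∩ A, Set.inter_subset_left, ?_, ?_⟩
    · by_contra hno
      push_neg at hno
      have hcl : G.IsClique (G.neighborSet v ∩ A) := by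
        intro a ha b hb hne
        by_contra hnadj
        exact hnadj (hno a ha b hb hne)
      have hperf : IsPerfectOn G (A ∪ {v}) := perfect_extend hvA hAperf hcl
      refine hNoDiv (A ∪ {v}) B ?_ ?_ hperf hBc
      · rw [Set.union_right_comm, hUn, hSdef]
        exact Set.compl_union_self {v}
      · rw [Set.disjoint_union_left]
        exact ⟨hdis, Set.disjoint_singleton_left.mpr hvB⟩
    · have hdiff : G.neighborSet v \ (G.neighborSet v ∩ A) = G.neighborSet v ∩ B := by
        ext x
        simp only [Set.mem_diff, Set.mem_inter_iff, SimpleGraph.mem_neighborSet]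
        constructor
        · rintro ⟨hadj, hnot⟩
          refine ⟨hadj, ?_⟩
          have hxS : x ∈ S := by
            intro h
            simp only [Set.mem_singleton_iff] at h
            exact G.ne_of_adj hadj h.symm
          rcases hUn ▸ hxS with h | h
          · exact absurd ⟨hadj, h⟩ hnot
          · exact h
        · rintro ⟨hadj, hxB⟩
          exact ⟨hadj, fun h => (Set.disjoint_left.mp hdis h.2) hxB⟩
      rw [hdiff]
      refine le_antisymm ?_ hclaim3
      exact le_trans (omegaOn_mono Set.inter_subset_left) hclaim4
  · -- degenerate case : V = {v}
    exfalso
    apply hG.1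
    intro H hH hne
    obtain ⟨w, hw⟩ := hne
    have hall : ∀ x : V, x = v := by
      intro x
      by_contra hx
      exact hSne ⟨x, hx⟩
    have hH' : H = {w} := by
      ext x
      simp only [Set.mem_singleton_iff]
      constructor
      · intro hx
        rw [hall x, hall w]
      · rintro rfl
        exact hw
    refine ⟨{w}, ∅, by simp [hH'], by simp, perfect_singleton G w, ?_⟩
    rw [omegaOn_empty, hH', omegaOn_singleton]
    omega
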